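/- arXiv:2309.08852 — 3 statements merged into one kernel-verified Lean document; each statement's English description precedes it below -/
import Mathlib

section
/- Consider the augmented closed-loop system ζ_{k+1} = 𝒜ζ_k + ℬ₂q_k + ℬ₃w_k (zero external input φ ≡ 0), with p_k = 𝒞_p ζ_k ∈ ℝ^{n_Φ}, q_k = Φ̃(p_k) where Φ̃ : ℝ^{n_Φ} → ℝ^{n_Φ} satisfies Φ̃(p)ᵢ² ≤ pᵢ² for all p and all i (element-wise sector bound sec[−1,1]); v_k = 𝒞_v ζ_k + 𝒟_v q_k ∈ ℝ^{n_w}, and w_k = Δ·v_k for a scalar Δ with |Δ| ≤ 1. Set r_k = (p_k, q_k), s_k = (v_k, w_k), so r_k = 𝒞₁ζ_k + 𝒟₁₂q_k and s_k = 𝒞₂ζ_k + 𝒟₂₂q_k + 𝒟₂₃w_k with 𝒞₁ = [𝒞_p; 0], 𝒟₁₂ = [0; I], 𝒞₂ = [𝒞_v; 0], 𝒟₂₂ = [𝒟_v; 0], 𝒟₂₃ = [0; I]. Let ρ ∈ (0,1], let P be symmetric positive definite, and suppose there exist a diagonal matrix Λ with nonnegative diagonal entries, symmetric matrices M₁, M₂,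 and scalars λ₁ > 0, λ₂ > 0 such that M₁ − λ₁·blkdiag(Λ, −Λ) and M₂ − λ₂·blkdiag(I, −I) are positive definite, and such that ΓᵀΠΓ is negative semidefinite, where Γ has block rows [I, 0, 0], [𝒜, ℬ₂, ℬ₃], [𝒞₁, 𝒟₁₂, 0], [𝒞₂, 𝒟₂₂, 𝒟₂₃] and Π = blkdiag(−ρ²P, P, M₁, M₂). Then every trajectory satisfies ζ_kᵀPζ_k ≤ ρ^{2k}·ζ₀ᵀPζ₀ for all k ≥ 0, and consequently ‖ζ_k‖ ≤ √(λ_max(P)/λ_min(P))·ρᵏ·‖ζ₀‖. -/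
open Matrix

set_option maxHeartbeats 1000000

open Matrix

lemma quad_form_bounds {n : ℕ} (P : Matrix (Fin n) (Fin n) ℝ)
    (hP : P.IsHermitian) (x : Fin n → ℝ) (hne : (Finset.univ : Finset (Fin n)).Nonempty) :
    Finset.univ.inf' hne hP.eigenvalues * (x ⬝ᵥ x) ≤ x ⬝ᵥ P *ᵥ x ∧
    x ⬝ᵥ P *ᵥ x ≤ Finset.univ.sup' hne hP.eigenvalues * (x ⬝ᵥ x) := by
  set U : Matrix (Fin n) (Fin n) ℝ := (hP.eigenvectorUnitary : Matrix (Fin n) (Fin n) ℝ) with hU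
  set y : Fin n → ℝ := Uᵀ *ᵥ x with hy
  have hstar : (star (hP.eigenvectorUnitary : Matrix (Fin n) (Fin n) ℝ)) = Uᵀ := by
    rw [star_eq_conjTranspose, conjTranspose_eq_transpose_of_trivial, hU]
  have hUU : U * Uᵀ = 1 := by
    rw [← hstar, hU]; exact Unitary.coe_mul_star_self _
  have hyy : y ⬝ᵥ y = x ⬝ᵥ x := by
    rw [hy, mulVec_transpose, ← dotProduct_mulVec, mulVec_vecMul, hUU, one_mulVec]
  have hquad : x ⬝ᵥ P *ᵥ x = ∑ i, hP.eigenvalues i * (y i) ^ 2 := by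
    conv_lhs => rw [hP.spectral_theorem]
    rw [Unitary.conjStarAlgAut_apply, hstar, ← mulVec_mulVec, ← mulVec_mulVec, dotProduct_mulVec, ← mulVec_transpose, ← hy]
    simp only [dotProduct, mulVec_diagonal, Function.comp]
    refine Finset.sum_congr rfl fun i _ => ?_
    simp only [RCLike.ofReal_real_eq_id, id]
    ring
  constructor
  · rw [hquad, ← hyy]
    have : Finset.univ.inf' hne hP.eigenvalues * (y ⬝ᵥ y) = ∑ i, Finset.univ.inf' hne hP.eigenvalues * (y i)^2 := by
      simp [dotProduct, Finset.mul_sum]; exact Finset.sum_congr rfl fun i _ => by ring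
    rw [this]
    exact Finset.sum_le_sum fun i _ => mul_le_mul_of_nonneg_right (Finset.inf'_le _ (Finset.mem_univ i)) (sq_nonneg _)
  · rw [hquad, ← hyy]
    have : Finset.univ.sup' hne hP.eigenvalues * (y ⬝ᵥ y) = ∑ i, Finset.univ.sup' hne hP.eigenvalues * (y i)^2 := by
      simp [dotProduct, Finset.mul_sum]; exact Finset.sum_congr rfl fun i _ => by ring
    rw [this]
    exact Finset.sum_le_sum fun i _ => mul_le_mul_of_nonneg_right (Finset.le_sup' _ (Finset.mem_univ i)) (sq_nonneg _)


/-- Robust exponential stability (Theorem 1): for the augmented closed loop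
with sector-bounded nonlinearity `Φ̃` (sector `[-1,1]`) and norm-bounded scalar
uncertainty `|Δ| ≤ 1`, feasibility of the LMI `ΓᵀΠΓ ⪯ 0` together with the
S-procedure conditions on the multipliers `M₁, M₂` implies
`ζ_kᵀPζ_k ≤ ρ^{2k} ζ₀ᵀPζ₀` and
`‖ζ_k‖ ≤ √(λmax(P)/λmin(P)) ρᵏ ‖ζ₀‖` for all `k`. -/
theorem robust_exponential_stability
    (nζ nΦ nw : ℕ) (hnζ : 0 < nζ)
    (ρ : ℝ) (hρ0 : 0 < ρ) (hρ1 : ρ ≤ 1)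
    (P : Matrix (Fin nζ) (Fin nζ) ℝ) (hP : P.PosDef)
    (Φt : (Fin nΦ → ℝ) → (Fin nΦ → ℝ))
    (hΦt : ∀ p : Fin nΦ → ℝ, ∀ i, (Φt p i) ^ 2 ≤ (p i) ^ 2)
    (Δ : ℝ) (hΔ : |Δ| ≤ 1)
    (A : Matrix (Fin nζ) (Fin nζ) ℝ)
    (B₂ : Matrix (Fin nζ) (Fin nΦ) ℝ)
    (B₃ : Matrix (Fin nζ) (Fin nw) ℝ)
    (Cp : Matrix (Fin nΦ) (Fin nζ) ℝ)
    (Cv : Matrix (Fin nw) (Fin nζ) ℝ)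
    (Dv : Matrix (Fin nw) (Fin nΦ) ℝ)
    (C₁ : Matrix (Fin nΦ ⊕ Fin nΦ) (Fin nζ) ℝ) (hC₁ : C₁ = fromRows Cp 0)
    (D₁₂ : Matrix (Fin nΦ ⊕ Fin nΦ) (Fin nΦ) ℝ) (hD₁₂ : D₁₂ = fromRows 0 1)
    (C₂ : Matrix (Fin nw ⊕ Fin nw) (Fin nζ) ℝ) (hC₂ : C₂ = fromRows Cv 0)
    (D₂₂ : Matrix (Fin nw ⊕ Fin nw) (Fin nΦ) ℝ) (hD₂₂ : D₂₂ = fromRows Dv 0)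
    (D₂₃ : Matrix (Fin nw ⊕ Fin nw) (Fin nw) ℝ) (hD₂₃ : D₂₃ = fromRows 0 1)
    (Λ : Fin nΦ → ℝ) (hΛ : ∀ i, 0 ≤ Λ i)
    (M₁ : Matrix (Fin nΦ ⊕ Fin nΦ) (Fin nΦ ⊕ Fin nΦ) ℝ) (hM₁ : M₁.IsSymm)
    (M₂ : Matrix (Fin nw ⊕ Fin nw) (Fin nw ⊕ Fin nw) ℝ) (hM₂ : M₂.IsSymm)
    (lam₁ lam₂ : ℝ) (hlam₁ : 0 < lam₁) (hlam₂ : 0 < lam₂)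
    (hM₁pd : (M₁ - lam₁ •
        fromBlocks (diagonal Λ) 0 0 (-(diagonal Λ))).PosDef)
    (hM₂pd : (M₂ - lam₂ •
        fromBlocks (1 : Matrix (Fin nw) (Fin nw) ℝ) 0 0
          (-(1 : Matrix (Fin nw) (Fin nw) ℝ))).PosDef)
    (Γ : Matrix ((Fin nζ ⊕ Fin nζ) ⊕ ((Fin nΦ ⊕ Fin nΦ) ⊕ (Fin nw ⊕ Fin nw)))
        (Fin nζ ⊕ (Fin nΦ ⊕ Fin nw)) ℝ)
    (hΓ : Γ = fromRows
        (fromRows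
          (fromCols (1 : Matrix (Fin nζ) (Fin nζ) ℝ) (fromCols 0 0))
          (fromCols A (fromCols B₂ B₃)))
        (fromRows
          (fromCols C₁ (fromCols D₁₂ 0))
          (fromCols C₂ (fromCols D₂₂ D₂₃))))
    (Pm : Matrix ((Fin nζ ⊕ Fin nζ) ⊕ ((Fin nΦ ⊕ Fin nΦ) ⊕ (Fin nw ⊕ Fin nw)))
        ((Fin nζ ⊕ Fin nζ) ⊕ ((Fin nΦ ⊕ Fin nΦ) ⊕ (Fin nw ⊕ Fin nw))) ℝ)
    (hPm : Pm = fromBlocks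
        (fromBlocks (-(ρ ^ 2) • P) 0 0 P) 0 0
        (fromBlocks M₁ 0 0 M₂))
    (hLMI : (-(Γᵀ * Pm * Γ)).PosSemidef)
    (ζ : ℕ → Fin nζ → ℝ) (p q : ℕ → Fin nΦ → ℝ) (v w : ℕ → Fin nw → ℝ)
    (hp : ∀ k, p k = Cp.mulVec (ζ k))
    (hq : ∀ k, q k = Φt (p k))
    (hv : ∀ k, v k = Cv.mulVec (ζ k) + Dv.mulVec (q k))
    (hw : ∀ k, w k = Δ • v k)
    (hdyn : ∀ k, ζ (k + 1) = A.mulVec (ζ k) + B₂.mulVec (q k) + B₃.mulVec (w k)) :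
    ∀ k : ℕ,
      ζ k ⬝ᵥ P.mulVec (ζ k) ≤ ρ ^ (2 * k) * (ζ 0 ⬝ᵥ P.mulVec (ζ 0)) ∧
      Real.sqrt (ζ k ⬝ᵥ ζ k) ≤
        Real.sqrt
            ((Finset.univ.sup' (Finset.univ_nonempty_iff.mpr ⟨⟨0, hnζ⟩⟩)
                hP.1.eigenvalues) /
              (Finset.univ.inf' (Finset.univ_nonempty_iff.mpr ⟨⟨0, hnζ⟩⟩)
                hP.1.eigenvalues)) *
          ρ ^ k * Real.sqrt (ζ 0 ⬝ᵥ ζ 0) := by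
  -- one-step decrease
  have hstep : ∀ k, ζ (k+1) ⬝ᵥ P *ᵥ ζ (k+1) ≤ ρ^2 * (ζ k ⬝ᵥ P *ᵥ ζ k) := by
    intro k
    set x : Fin nζ ⊕ (Fin nΦ ⊕ Fin nw) → ℝ := Sum.elim (ζ k) (Sum.elim (q k) (w k)) with hx
    set r : Fin nΦ ⊕ Fin nΦ → ℝ := Sum.elim (p k) (q k) with hr
    set s : Fin nw ⊕ Fin nw → ℝ := Sum.elim (v k) (w k) with hs
    have hΓx : Γ *ᵥ x = Sum.elim (Sum.elim (ζ k) (ζ (k+1))) (Sum.elim r s) := by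
      funext i
      rcases i with (i|i)|((i|i)|(i|i)) <;>
        simp [hΓ, hC₁, hD₁₂, hC₂, hD₂₂, hD₂₃, hx, hr, hs, hdyn k, hp k, hv k, add_assoc,
          fromBlocks_mulVec, Sum.elim_comp_inl, Sum.elim_comp_inr]
    have hquad : x ⬝ᵥ ((Γᵀ * Pm * Γ) *ᵥ x)
        = -((ρ^2) * (ζ k ⬝ᵥ P *ᵥ ζ k)) + ζ (k+1) ⬝ᵥ P *ᵥ ζ (k+1)
          + r ⬝ᵥ M₁ *ᵥ r + s ⬝ᵥ M₂ *ᵥ s := by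
      rw [← mulVec_mulVec, ← mulVec_mulVec, dotProduct_mulVec, vecMul_transpose, hΓx, hPm]
      simp [fromBlocks_mulVec, Sum.elim_comp_inl, Sum.elim_comp_inr,
        sumElim_dotProduct_sumElim, smul_mulVec, neg_smul, neg_mulVec,
        dotProduct_neg, smul_dotProduct, dotProduct_smul, smul_eq_mul]
      ring
    have hLMIx : x ⬝ᵥ ((Γᵀ * Pm * Γ) *ᵥ x) ≤ 0 := by
      have h := hLMI.dotProduct_mulVec_nonneg x
      simp only [star_trivial, neg_mulVec, dotProduct_neg] at h
      linarith
    -- sector bound multiplier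
    have hr1 : (0:ℝ) ≤ r ⬝ᵥ (fromBlocks (diagonal Λ) 0 0 (-(diagonal Λ))) *ᵥ r := by
      have : r ⬝ᵥ (fromBlocks (diagonal Λ) 0 0 (-(diagonal Λ))) *ᵥ r
          = ∑ i, Λ i * ((p k i)^2 - (q k i)^2) := by
        simp [hr, fromBlocks_mulVec, Sum.elim_comp_inl, Sum.elim_comp_inr,
          sumElim_dotProduct_sumElim, neg_mulVec, dotProduct_neg, dotProduct,
          mulVec_diagonal]
        rw [← sub_eq_add_neg, ← Finset.sum_sub_distrib]
        exact Finset.sum_congr rfl fun i _ => by ring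
      rw [this]
      refine Finset.sum_nonneg fun i _ => mul_nonneg (hΛ i) (sub_nonneg.2 ?_)
      rw [hq k]; exact hΦt (p k) i
    have hM1 : (0:ℝ) ≤ r ⬝ᵥ M₁ *ᵥ r := by
      have h := hM₁pd.posSemidef.dotProduct_mulVec_nonneg r
      simp only [star_trivial, sub_mulVec, dotProduct_sub, smul_mulVec,
        dotProduct_smul, smul_eq_mul] at h
      nlinarith [mul_nonneg hlam₁.le hr1]
    -- uncertainty multiplier
    have hs1 : (0:ℝ) ≤ s ⬝ᵥ (fromBlocks (1 : Matrix (Fin nw) (Fin nw) ℝ) 0 0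
        (-(1 : Matrix (Fin nw) (Fin nw) ℝ))) *ᵥ s := by
      have hww : w k ⬝ᵥ w k = Δ^2 * (v k ⬝ᵥ v k) := by
        rw [hw k]; simp [smul_dotProduct, dotProduct_smul, smul_eq_mul]; ring
      have hvv : (0:ℝ) ≤ v k ⬝ᵥ v k := Finset.sum_nonneg fun i _ => mul_self_nonneg _
      have hΔ2 : Δ^2 ≤ 1 := by nlinarith [abs_nonneg Δ, sq_abs Δ]
      have : s ⬝ᵥ (fromBlocks (1 : Matrix (Fin nw) (Fin nw) ℝ) 0 0
          (-(1 : Matrix (Fin nw) (Fin nw) ℝ))) *ᵥ s = v k ⬝ᵥ v k - w k ⬝ᵥ w k := by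
        simp [hs, fromBlocks_mulVec, Sum.elim_comp_inl, Sum.elim_comp_inr,
          sumElim_dotProduct_sumElim, neg_mulVec, dotProduct_neg, one_mulVec]
        ring
      rw [this, hww]; nlinarith
    have hM2 : (0:ℝ) ≤ s ⬝ᵥ M₂ *ᵥ s := by
      have h := hM₂pd.posSemidef.dotProduct_mulVec_nonneg s
      simp only [star_trivial, sub_mulVec, dotProduct_sub, smul_mulVec,
        dotProduct_smul, smul_eq_mul] at h
      nlinarith [mul_nonneg hlam₂.le hs1]
    linarith [hquad ▸ hLMIx]
  -- part 1 by induction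
  have hV : ∀ k, ζ k ⬝ᵥ P *ᵥ ζ k ≤ ρ ^ (2*k) * (ζ 0 ⬝ᵥ P *ᵥ ζ 0) := by
    intro k
    induction k with
    | zero => simp
    | succ k ih =>
      calc ζ (k+1) ⬝ᵥ P *ᵥ ζ (k+1) ≤ ρ^2 * (ζ k ⬝ᵥ P *ᵥ ζ k) := hstep k
        _ ≤ ρ^2 * (ρ ^ (2*k) * (ζ 0 ⬝ᵥ P *ᵥ ζ 0)) :=
            mul_le_mul_of_nonneg_left ih (by positivity)
        _ = ρ ^ (2*(k+1)) * (ζ 0 ⬝ᵥ P *ᵥ ζ 0) := by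
            rw [show 2*(k+1) = 2*k+2 by ring, pow_add]; ring
  intro k
  refine ⟨hV k, ?_⟩
  have hne : (Finset.univ : Finset (Fin nζ)).Nonempty :=
    Finset.univ_nonempty_iff.mpr ⟨⟨0, hnζ⟩⟩
  set lmin := Finset.univ.inf' hne hP.1.eigenvalues with hlmin
  set lmax := Finset.univ.sup' hne hP.1.eigenvalues with hlmax
  have hmin_pos : 0 < lmin := (Finset.lt_inf'_iff _).2 fun i _ => hP.eigenvalues_pos i
  have hmax_pos : 0 < lmax :=
    lt_of_lt_of_le (hP.eigenvalues_pos ⟨0, hnζ⟩) (Finset.le_sup' _ (Finset.mem_univ _))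
  obtain ⟨hk_lo, _⟩ := quad_form_bounds P hP.1 (ζ k) hne
  obtain ⟨_, h0_hi⟩ := quad_form_bounds P hP.1 (ζ 0) hne
  have h00 : (0:ℝ) ≤ ζ 0 ⬝ᵥ ζ 0 := Finset.sum_nonneg fun i _ => mul_self_nonneg _
  have key2 : ζ k ⬝ᵥ ζ k ≤ (lmax / lmin) * (ρ ^ (2*k) * (ζ 0 ⬝ᵥ ζ 0)) := by
    rw [div_mul_eq_mul_div, le_div_iff₀ hmin_pos]
    have h1 : lmin * (ζ k ⬝ᵥ ζ k) ≤ ρ ^ (2*k) * (lmax * (ζ 0 ⬝ᵥ ζ 0)) :=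
      le_trans hk_lo (le_trans (hV k)
        (mul_le_mul_of_nonneg_left h0_hi (pow_nonneg hρ0.le _)))
    nlinarith [h1]
  calc Real.sqrt (ζ k ⬝ᵥ ζ k)
      ≤ Real.sqrt ((lmax / lmin) * (ρ ^ (2*k) * (ζ 0 ⬝ᵥ ζ 0))) := Real.sqrt_le_sqrt key2
    _ = Real.sqrt (lmax / lmin) * ρ ^ k * Real.sqrt (ζ 0 ⬝ᵥ ζ 0) := by
        rw [Real.sqrt_mul (by positivity : (0:ℝ) ≤ lmax / lmin),
          Real.sqrt_mul (by positivity : (0:ℝ) ≤ ρ ^ (2*k)),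
          show ρ ^ (2*k) = (ρ^k)^2 by rw [← pow_mul, mul_comm],
          Real.sqrt_sq (pow_nonneg hρ0.le k)]
        ring
end

section
/- Consider the perturbed augmented closed-loop system ζ_{k+1} = 𝒜ζ_k + ℬ₁φ_k + ℬ₂q_k + ℬ₃w_k + ℬ₄d_k, with p_k = 𝒞_p ζ_k ∈ ℝ^{n_Φ}, q_k = Φ̃(p_k) where Φ̃ satisfies Φ̃(p)ᵢ² ≤ pᵢ² for all p and i; v_k = 𝒞_v ζ_k + 𝒟_{v1}φ_k + 𝒟_{v2}q_k + 𝒟_{v4}d_k ∈ ℝ^{n_w}, w_k = Δ·v_k for a scalar Δ with |Δ| ≤ 1; r_k = (p_k, q_k) and s_k = (v_k, w_k), written as r_k = 𝒞₁ζ_k + 𝒟₁₂q_k and s_k = 𝒞₂ζ_k + 𝒟₂₁φ_k + 𝒟₂₂q_k + 𝒟₂₃w_k + 𝒟₂₄d_k with 𝒞₁ = [𝒞_p; 0], 𝒟₁₂ = [0; I], 𝒞₂ = [𝒞_v; 0], 𝒟₂₁ = [𝒟_{v1}; 0], 𝒟₂₂ = [𝒟_{v2}; 0], 𝒟₂₃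 = [0; I], 𝒟₂₄ = [𝒟_{v4}; 0]. Let ρ ∈ (0,1], let P be symmetric positive definite, let Λ be diagonal with nonnegative entries, let M₁, M₂ be symmetric with M₁ − λ₁·blkdiag(Λ, −Λ) and M₂ − λ₂·blkdiag(I, −I) positive definite for some λ₁, λ₂ > 0, and let μ_d > 0, μ_φ > 0. Suppose ΓᵀΠΓ is negative semidefinite, where Γ has block rows [I,0,0,0,0], [𝒜,ℬ₁,ℬ₂,ℬ₃,ℬ₄], [𝒞₁,0,𝒟₁₂,0,0], [𝒞₂,𝒟₂₁,𝒟₂₂,𝒟₂₃,𝒟₂₄], [0,0,0,0,I_{n_d}], [0,I_{n_φ},0,0,0], and Π = blkdiag(−ρ²P, P, M₁, M₂, −μ_d·I_{n_d}, −μ_φ·I_{n_φ}). Define σ₀ = ζ₀ᵀPζ₀ and σ_{k+1} = ρ²σ_k + μ_d‖d_k‖² + μ_φ‖φ_k‖². Then every trajectory satisfies ζ_kᵀPζ_k ≤ σ_k for all k ≥ 0. -/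
open Matrix

set_option maxHeartbeats 1000000 in
/-- Reachable-set bound (Proposition 1): for the perturbed uncertain augmented
closed loop with sector-bounded nonlinearity `Φ̃` (sector `[-1,1]`), scalar
uncertainty `|Δ| ≤ 1`, and LMI `ΓᵀΠΓ ⪯ 0` with
`Π = blkdiag(−ρ²P, P, M₁, M₂, −μ_d I, −μ_φ I)`, every trajectory satisfies
`ζ_kᵀPζ_k ≤ σ_k`, where `σ₀ = ζ₀ᵀPζ₀` and
`σ_{k+1} = ρ²σ_k + μ_d‖d_k‖² + μ_φ‖φ_k‖²`. -/
theorem reachable_set_bound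
    (nζ nφ nΦ nw nd : ℕ)
    (ρ : ℝ) (hρ0 : 0 < ρ) (hρ1 : ρ ≤ 1)
    (P : Matrix (Fin nζ) (Fin nζ) ℝ) (hP : P.PosDef)
    (Φt : (Fin nΦ → ℝ) → (Fin nΦ → ℝ))
    (hΦt : ∀ p : Fin nΦ → ℝ, ∀ i, (Φt p i) ^ 2 ≤ (p i) ^ 2)
    (Δ : ℝ) (hΔ : |Δ| ≤ 1)
    (A : Matrix (Fin nζ) (Fin nζ) ℝ)
    (B₁ : Matrix (Fin nζ) (Fin nφ) ℝ)
    (B₂ : Matrix (Fin nζ) (Fin nΦ) ℝ)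
    (B₃ : Matrix (Fin nζ) (Fin nw) ℝ)
    (B₄ : Matrix (Fin nζ) (Fin nd) ℝ)
    (Cp : Matrix (Fin nΦ) (Fin nζ) ℝ)
    (Cv : Matrix (Fin nw) (Fin nζ) ℝ)
    (Dv1 : Matrix (Fin nw) (Fin nφ) ℝ)
    (Dv2 : Matrix (Fin nw) (Fin nΦ) ℝ)
    (Dv4 : Matrix (Fin nw) (Fin nd) ℝ)
    (C₁ : Matrix (Fin nΦ ⊕ Fin nΦ) (Fin nζ) ℝ) (hC₁ : C₁ = fromRows Cp 0)
    (D₁₂ : Matrix (Fin nΦ ⊕ Fin nΦ) (Fin nΦ) ℝ) (hD₁₂ : D₁₂ = fromRows 0 1)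
    (C₂ : Matrix (Fin nw ⊕ Fin nw) (Fin nζ) ℝ) (hC₂ : C₂ = fromRows Cv 0)
    (D₂₁ : Matrix (Fin nw ⊕ Fin nw) (Fin nφ) ℝ) (hD₂₁ : D₂₁ = fromRows Dv1 0)
    (D₂₂ : Matrix (Fin nw ⊕ Fin nw) (Fin nΦ) ℝ) (hD₂₂ : D₂₂ = fromRows Dv2 0)
    (D₂₃ : Matrix (Fin nw ⊕ Fin nw) (Fin nw) ℝ) (hD₂₃ : D₂₃ = fromRows 0 1)
    (D₂₄ : Matrix (Fin nw ⊕ Fin nw) (Fin nd) ℝ) (hD₂₄ : D₂₄ = fromRows Dv4 0)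
    (Λ : Fin nΦ → ℝ) (hΛ : ∀ i, 0 ≤ Λ i)
    (M₁ : Matrix (Fin nΦ ⊕ Fin nΦ) (Fin nΦ ⊕ Fin nΦ) ℝ) (hM₁ : M₁.IsSymm)
    (M₂ : Matrix (Fin nw ⊕ Fin nw) (Fin nw ⊕ Fin nw) ℝ) (hM₂ : M₂.IsSymm)
    (lam₁ lam₂ : ℝ) (hlam₁ : 0 < lam₁) (hlam₂ : 0 < lam₂)
    (hM₁pd : (M₁ - lam₁ •
        fromBlocks (diagonal Λ) 0 0 (-(diagonal Λ))).PosDef)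
    (hM₂pd : (M₂ - lam₂ •
        fromBlocks (1 : Matrix (Fin nw) (Fin nw) ℝ) 0 0
          (-(1 : Matrix (Fin nw) (Fin nw) ℝ))).PosDef)
    (μd μφ : ℝ) (hμd : 0 < μd) (hμφ : 0 < μφ)
    (Γ : Matrix
        (((Fin nζ ⊕ Fin nζ) ⊕ ((Fin nΦ ⊕ Fin nΦ) ⊕ (Fin nw ⊕ Fin nw)))
          ⊕ (Fin nd ⊕ Fin nφ))
        (Fin nζ ⊕ (Fin nφ ⊕ (Fin nΦ ⊕ (Fin nw ⊕ Fin nd)))) ℝ)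
    (hΓ : Γ = fromRows
        (fromRows
          (fromRows
            (fromCols (1 : Matrix (Fin nζ) (Fin nζ) ℝ)
              (fromCols 0 (fromCols 0 (fromCols 0 0))))
            (fromCols A
              (fromCols B₁ (fromCols B₂ (fromCols B₃ B₄)))))
          (fromRows
            (fromCols C₁
              (fromCols 0 (fromCols D₁₂ (fromCols 0 0))))
            (fromCols C₂
              (fromCols D₂₁ (fromCols D₂₂ (fromCols D₂₃ D₂₄))))))
        (fromRows
          (fromCols 0
            (fromCols 0 (fromCols 0
              (fromCols 0 (1 : Matrix (Fin nd) (Fin nd) ℝ)))))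
          (fromCols 0
            (fromCols (1 : Matrix (Fin nφ) (Fin nφ) ℝ)
              (fromCols 0 (fromCols 0 0))))))
    (Pm : Matrix
        (((Fin nζ ⊕ Fin nζ) ⊕ ((Fin nΦ ⊕ Fin nΦ) ⊕ (Fin nw ⊕ Fin nw)))
          ⊕ (Fin nd ⊕ Fin nφ))
        (((Fin nζ ⊕ Fin nζ) ⊕ ((Fin nΦ ⊕ Fin nΦ) ⊕ (Fin nw ⊕ Fin nw)))
          ⊕ (Fin nd ⊕ Fin nφ)) ℝ)
    (hPm : Pm = fromBlocks
        (fromBlocks (fromBlocks (-(ρ ^ 2) • P) 0 0 P) 0 0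
          (fromBlocks M₁ 0 0 M₂))
        0 0
        (fromBlocks (-μd • (1 : Matrix (Fin nd) (Fin nd) ℝ)) 0 0
          (-μφ • (1 : Matrix (Fin nφ) (Fin nφ) ℝ))))
    (hLMI : (-(Γᵀ * Pm * Γ)).PosSemidef)
    (ζ : ℕ → Fin nζ → ℝ) (φv : ℕ → Fin nφ → ℝ) (d : ℕ → Fin nd → ℝ)
    (p q : ℕ → Fin nΦ → ℝ) (v w : ℕ → Fin nw → ℝ)
    (hp : ∀ k, p k = Cp.mulVec (ζ k))
    (hq : ∀ k, q k = Φt (p k))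
    (hv : ∀ k, v k = Cv.mulVec (ζ k) + Dv1.mulVec (φv k)
        + Dv2.mulVec (q k) + Dv4.mulVec (d k))
    (hw : ∀ k, w k = Δ • v k)
    (hdyn : ∀ k, ζ (k + 1) = A.mulVec (ζ k) + B₁.mulVec (φv k)
        + B₂.mulVec (q k) + B₃.mulVec (w k) + B₄.mulVec (d k))
    (σ : ℕ → ℝ)
    (hσ0 : σ 0 = ζ 0 ⬝ᵥ P.mulVec (ζ 0))
    (hσ : ∀ k, σ (k + 1) = ρ ^ 2 * σ k + μd * (d k ⬝ᵥ d k)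
        + μφ * (φv k ⬝ᵥ φv k)) :
    ∀ k : ℕ, ζ k ⬝ᵥ P.mulVec (ζ k) ≤ σ k := by

  have dp_self_nonneg : ∀ {n : ℕ} (u : Fin n → ℝ), 0 ≤ u ⬝ᵥ u := by
    intro n u
    exact Finset.sum_nonneg fun i _ => mul_self_nonneg _
  have step : ∀ k, ζ (k+1) ⬝ᵥ P *ᵥ ζ (k+1) ≤
      ρ ^ 2 * (ζ k ⬝ᵥ P *ᵥ ζ k) + μd * (d k ⬝ᵥ d k) + μφ * (φv k ⬝ᵥ φv k) := by
    intro k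
    set x : Fin nζ ⊕ (Fin nφ ⊕ (Fin nΦ ⊕ (Fin nw ⊕ Fin nd))) → ℝ :=
      Sum.elim (ζ k) (Sum.elim (φv k) (Sum.elim (q k) (Sum.elim (w k) (d k)))) with hx
    have hy : Γ *ᵥ x = Sum.elim
        (Sum.elim (Sum.elim (ζ k) (ζ (k+1)))
          (Sum.elim (Sum.elim (p k) (q k)) (Sum.elim (v k) (w k))))
        (Sum.elim (d k) (φv k)) := by
      subst hΓ hC₁ hD₁₂ hC₂ hD₂₁ hD₂₂ hD₂₃ hD₂₄
      funext i
      rcases i with ((i|i)|((i|i)|(i|i)))|(i|i) <;>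
        simp [hx, hdyn k, hp k, hv k, add_assoc, Matrix.zero_mulVec,
          Matrix.one_mulVec, Matrix.fromBlocks_mulVec, Sum.elim_comp_inl,
          Sum.elim_comp_inr]
    have hQ : (Γ *ᵥ x) ⬝ᵥ Pm *ᵥ (Γ *ᵥ x) ≤ 0 := by
      have h := hLMI.dotProduct_mulVec_nonneg x
      have e : x ⬝ᵥ (Γᵀ * Pm * Γ) *ᵥ x = (Γ *ᵥ x) ⬝ᵥ Pm *ᵥ (Γ *ᵥ x) := by
        rw [← Matrix.mulVec_mulVec, ← Matrix.mulVec_mulVec,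
          Matrix.dotProduct_mulVec, Matrix.vecMul_transpose]
      simp only [star_trivial, Matrix.neg_mulVec, dotProduct_neg] at h
      linarith [e ▸ h]
    rw [hy, hPm] at hQ
    simp only [fromBlocks_mulVec, Matrix.zero_mulVec, add_zero, zero_add,
      Sum.elim_comp_inl, Sum.elim_comp_inr, sumElim_dotProduct_sumElim,
      Matrix.smul_mulVec, dotProduct_smul, Matrix.one_mulVec,
      smul_eq_mul, neg_smul, neg_mul, Matrix.neg_mulVec, dotProduct_neg] at hQ
    have hr : 0 ≤ Sum.elim (p k) (q k) ⬝ᵥ M₁ *ᵥ Sum.elim (p k) (q k) := by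
      have h1 := hM₁pd.posSemidef.dotProduct_mulVec_nonneg (Sum.elim (p k) (q k))
      simp only [star_trivial, Matrix.sub_mulVec, dotProduct_sub,
        Matrix.smul_mulVec, dotProduct_smul, smul_eq_mul] at h1
      have h2 : 0 ≤ Sum.elim (p k) (q k) ⬝ᵥ
          (fromBlocks (diagonal Λ) 0 0 (-(diagonal Λ))) *ᵥ Sum.elim (p k) (q k) := by
        rw [fromBlocks_mulVec]
        simp only [Matrix.zero_mulVec, add_zero, zero_add, Sum.elim_comp_inl,
          Sum.elim_comp_inr, sumElim_dotProduct_sumElim, Matrix.neg_mulVec,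
          dotProduct_neg]
        have hle : q k ⬝ᵥ diagonal Λ *ᵥ q k ≤ p k ⬝ᵥ diagonal Λ *ᵥ p k := by
          apply Finset.sum_le_sum
          intro i _
          rw [Matrix.mulVec_diagonal, Matrix.mulVec_diagonal]
          have h3 : (q k i) ^ 2 ≤ (p k i) ^ 2 := by rw [hq k]; exact hΦt (p k) i
          nlinarith [hΛ i]
        linarith
      linarith [mul_nonneg hlam₁.le h2]
    have hs : 0 ≤ Sum.elim (v k) (w k) ⬝ᵥ M₂ *ᵥ Sum.elim (v k) (w k) := by
      have h1 := hM₂pd.posSemidef.dotProduct_mulVec_nonneg (Sum.elim (v k) (w k))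
      simp only [star_trivial, Matrix.sub_mulVec, dotProduct_sub,
        Matrix.smul_mulVec, dotProduct_smul, smul_eq_mul] at h1
      have h2 : 0 ≤ Sum.elim (v k) (w k) ⬝ᵥ
          (fromBlocks (1 : Matrix (Fin nw) (Fin nw) ℝ) 0 0
            (-(1 : Matrix (Fin nw) (Fin nw) ℝ))) *ᵥ Sum.elim (v k) (w k) := by
        rw [fromBlocks_mulVec]
        simp only [Matrix.zero_mulVec, add_zero, zero_add, Sum.elim_comp_inl,
          Sum.elim_comp_inr, sumElim_dotProduct_sumElim, Matrix.neg_mulVec,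
          Matrix.one_mulVec, dotProduct_neg]
        have hw' : w k ⬝ᵥ w k = Δ ^ 2 * (v k ⬝ᵥ v k) := by
          rw [hw k, smul_dotProduct, dotProduct_smul, smul_eq_mul, smul_eq_mul]
          ring
        have hΔ2 : Δ ^ 2 ≤ 1 := by nlinarith [abs_nonneg Δ, sq_abs Δ]
        rw [hw']
        nlinarith [dp_self_nonneg (v k)]
      linarith [mul_nonneg hlam₂.le h2]
    linarith
  intro k
  induction k with
  | zero => rw [hσ0]
  | succ k ih =>
      rw [hσ k]
      have hst := step k
      nlinarith [mul_le_mul_of_nonneg_left ih (sq_nonneg ρ)]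
end

section
/- Let n be a positive integer, α, β ∈ ℝⁿ with αᵢ ≤ βᵢ for every i, and let Φ : ℝⁿ → ℝⁿ be given element-wise by Φ(p)ᵢ = φᵢ(pᵢ) with each φᵢ sector-bounded in sec[αᵢ, βᵢ]. Let Λ be a diagonal n×n matrix with nonnegative diagonal entries, let λ₁ > 0, and let M₁ be a symmetric 2n×2n matrix such that M₁ − λ₁·[[−2A_φB_φΛ, (A_φ+B_φ)Λ], [(A_φ+B_φ)Λ, −2Λ]] is positive definite, where A_φ = diag(α), B_φ = diag(β). Then for every p ∈ ℝⁿ, the vector r = (p, Φ(p)) ∈ ℝ²ⁿ satisfies rᵀM₁r ≥ 0. -/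
open Matrix

/-- Sector quadratic constraint combined with the S-procedure: if
`M₁ − λ₁·[[−2AφBφΛ, (Aφ+Bφ)Λ], [(Aφ+Bφ)Λ, −2Λ]] ≻ 0` with `λ₁ > 0` and `Λ ⪰ 0`
diagonal, then for every `p` the vector `r = (p, Φ(p))` satisfies
`rᵀM₁r ≥ 0`, where `Φ` is element-wise sector-bounded in `sec[α, β]`. -/
theorem sector_s_procedure_multiplier
    (n : ℕ) (hn : 0 < n)
    (α β : Fin n → ℝ) (hαβ : ∀ i, α i ≤ β i)
    (φ : Fin n → ℝ → ℝ)
    (hsec : ∀ i, ∀ x : ℝ, (φ i x - α i * x) * (β i * x - φ i x) ≥ 0)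
    (Λ : Fin n → ℝ) (hΛ : ∀ i, 0 ≤ Λ i)
    (lam₁ : ℝ) (hlam₁ : 0 < lam₁)
    (M₁ : Matrix (Fin n ⊕ Fin n) (Fin n ⊕ Fin n) ℝ) (hM₁ : M₁.IsSymm)
    (hPD : (M₁ - lam₁ •
        fromBlocks
          ((-2 : ℝ) • (diagonal α * diagonal β * diagonal Λ))
          ((diagonal α + diagonal β) * diagonal Λ)
          ((diagonal α + diagonal β) * diagonal Λ)
          ((-2 : ℝ) • diagonal Λ)).PosDef) :
    ∀ p : Fin n → ℝ,
      0 ≤ (Sum.elim p (fun i => φ i (p i))) ⬝ᵥ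
        M₁.mulVec (Sum.elim p (fun i => φ i (p i))) := by
  intro p
  set r := Sum.elim p (fun i => φ i (p i)) with hr
  set S := fromBlocks
          ((-2 : ℝ) • (diagonal α * diagonal β * diagonal Λ))
          ((diagonal α + diagonal β) * diagonal Λ)
          ((diagonal α + diagonal β) * diagonal Λ)
          ((-2 : ℝ) • diagonal Λ) with hS
  have h1 : 0 ≤ r ⬝ᵥ (M₁ - lam₁ • S).mulVec r := by
    have := hPD.posSemidef.dotProduct_mulVec_nonneg r; rwa [star_trivial] at this
  have h2 : 0 ≤ r ⬝ᵥ S.mulVec r := by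
    rw [hS, hr, fromBlocks_mulVec, dotProduct, Fintype.sum_sum_type]
    simp only [Sum.elim_inl, Sum.elim_inr, Function.comp, add_mulVec,
      smul_mulVec, Pi.add_apply, Pi.smul_apply, smul_eq_mul,
      Matrix.add_mul, diagonal_mul_diagonal, mulVec_diagonal]
    rw [← Finset.sum_add_distrib]
    apply Finset.sum_nonneg
    intro i _
    have h := mul_nonneg (hΛ i) (hsec i (p i))
    nlinarith [h]
  have h3 : r ⬝ᵥ (M₁ - lam₁ • S).mulVec r
      = r ⬝ᵥ M₁.mulVec r - lam₁ * (r ⬝ᵥ S.mulVec r) := by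
    rw [sub_mulVec, dotProduct_sub, smul_mulVec, dotProduct_smul,
      smul_eq_mul]
  nlinarith [mul_nonneg hlam₁.le h2]
end
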